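/- For a special affine space A = (A, v⁰), the model vector space of the special affine dual A^# = Aff(A, I) = {affine φ : A → K with φ_v(v⁰) = 1} is canonically identified with Hom(Â/⟨v⁰⟩, K), i.e. with those linear functionals on the vector hull Â annihilating v⁰; and the double dual satisfies (A^#)^# ≅ A canonically. -/

import Mathlib

/-- A realization of the *vector hull* `Â` of an affine space `A`. -/
structure VectorHull (K : Type*) [Field K] (V : Type*) [AddCommGroup V] [Module K V]
    (A : Type*) [AddTorsor V A] (W : Type*) [AddCommGroup W] [Module K W] where
  ι : A → W
  j : V →ₗ[K] W
  oneA : W →ₗ[K] K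
  ι_injective : Function.Injective ι
  ι_vadd : ∀ (v : V) (a : A), ι (v +ᵥ a) = j v + ι a
  oneA_ι : ∀ a : A, oneA (ι a) = 1
  ker_oneA : LinearMap.ker oneA = LinearMap.range j
  span_range : Submodule.span K (Set.range ι) = ⊤

/-- Evaluation of the linear part of an affine function at a fixed model vector, as a linear
map on `Aff(A, K)`. -/
def linPartAt (K : Type*) [Field K] {V A : Type*} [AddCommGroup V] [Module K V]
    [AddTorsor V A] (v0 : V) : (A →ᵃ[K] K) →ₗ[K] K where
  toFun φ := φ.linear v0
  map_add' f g := by simp [AffineMap.add_linear]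
  map_smul' c f := by simp [AffineMap.smul_linear]

namespace VectorHull

variable {K V A W : Type*} [Field K]
    [AddCommGroup V] [Module K V] [AddTorsor V A]
    [AddCommGroup W] [Module K W]
variable (H : VectorHull K V A W)

lemma j_inj : Function.Injective H.j := by
  rw [injective_iff_map_eq_zero]
  intro v hv
  have a0 : A := Classical.arbitrary A
  have h := H.ι_vadd v a0
  rw [hv, zero_add] at h
  have h2 := H.ι_injective h
  have : v = (v +ᵥ a0) -ᵥ a0 := (vadd_vsub v a0).symm
  rw [this, h2, vsub_self]

lemma oneA_j (v : V) : H.oneA (H.j v) = 0 := by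
  have : H.j v ∈ LinearMap.ker H.oneA := by
    rw [H.ker_oneA]; exact ⟨v, rfl⟩
  exact this

/-- `w ↦ w - oneA w • ι a0`, landing in range j. -/
def pmap (a0 : A) : W →ₗ[K] W := LinearMap.id - H.oneA.smulRight (H.ι a0)

lemma pmap_apply (a0 : A) (w : W) : H.pmap a0 w = w - H.oneA w • H.ι a0 := rfl

lemma pmap_mem (a0 : A) (w : W) : H.pmap a0 w ∈ LinearMap.range H.j := by
  rw [← H.ker_oneA, LinearMap.mem_ker, pmap_apply, map_sub, map_smul, H.oneA_ι,
    smul_eq_mul, mul_one, sub_self]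

noncomputable def vOf (a0 : A) : W →ₗ[K] V :=
  (LinearEquiv.ofInjective H.j H.j_inj).symm.toLinearMap ∘ₗ
    (H.pmap a0).codRestrict (LinearMap.range H.j) (H.pmap_mem a0)

lemma j_vOf (a0 : A) (w : W) : H.j (H.vOf a0 w) = w - H.oneA w • H.ι a0 := by
  set y := ((H.pmap a0).codRestrict (LinearMap.range H.j) (H.pmap_mem a0)) w with hy
  have h1 : (LinearEquiv.ofInjective H.j H.j_inj)
      ((LinearEquiv.ofInjective H.j H.j_inj).symm y) = y :=
    (LinearEquiv.ofInjective H.j H.j_inj).apply_symm_apply y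
  have h2 := congrArg Subtype.val h1
  rw [LinearEquiv.ofInjective_apply] at h2
  have h3 : (y : W) = H.pmap a0 w := rfl
  rw [h3, pmap_apply] at h2
  exact h2

lemma vOf_ι (a0 : A) (a : A) : H.vOf a0 (H.ι a) = a -ᵥ a0 := by
  apply H.j_inj
  rw [j_vOf, H.oneA_ι, one_smul]
  have := H.ι_vadd (a -ᵥ a0) a0
  rw [vsub_vadd] at this
  rw [this]; abel

lemma vOf_j (a0 : A) (v : V) : H.vOf a0 (H.j v) = v := by
  apply H.j_inj
  rw [j_vOf, oneA_j, zero_smul, sub_zero]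

/-- Restriction of a linear functional on `W` to an affine map on `A`. -/
def resA (F : Module.Dual K W) : A →ᵃ[K] K where
  toFun a := F (H.ι a)
  linear := F ∘ₗ H.j
  map_vadd' p v := by
    simp [H.ι_vadd, vadd_eq_add]

noncomputable def res : Module.Dual K W →ₗ[K] (A →ᵃ[K] K) where
  toFun := H.resA
  map_add' F G := by ext a; simp [resA]
  map_smul' c F := by ext a; simp [resA]

lemma res_apply (F : Module.Dual K W) (a : A) : H.res F a = F (H.ι a) := rfl

lemma res_linear (F : Module.Dual K W) : (H.res F).linear = F ∘ₗ H.j := rfl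

/-- Extension of an affine map on `A` to a linear functional on `W`. -/
noncomputable def ext (a0 : A) : (A →ᵃ[K] K) →ₗ[K] Module.Dual K W where
  toFun ψ := ψ.linear ∘ₗ H.vOf a0 + ψ a0 • H.oneA
  map_add' f g := by
    ext w; simp [AffineMap.add_linear]; ring
  map_smul' c f := by
    ext w; simp [AffineMap.smul_linear]; ring

lemma ext_apply (a0 : A) (ψ : A →ᵃ[K] K) (w : W) :
    H.ext a0 ψ w = ψ.linear (H.vOf a0 w) + ψ a0 * H.oneA w := rfl

lemma res_ext (a0 : A) (ψ : A →ᵃ[K] K) : H.res (H.ext a0 ψ) = ψ := by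
  ext a
  rw [res_apply, ext_apply, H.vOf_ι, H.oneA_ι, mul_one]
  have := ψ.map_vadd a0 (a -ᵥ a0)
  rw [vsub_vadd] at this
  rw [this, vadd_eq_add]

lemma ext_res (a0 : A) (F : Module.Dual K W) : H.ext a0 (H.res F) = F := by
  apply LinearMap.ext_on H.span_range
  rintro w ⟨a, rfl⟩
  have : H.ext a0 (H.res F) (H.ι a) = H.res (H.ext a0 (H.res F)) a := rfl
  rw [this, H.res_ext, res_apply]

lemma ext_j (a0 : A) (ψ : A →ᵃ[K] K) (v : V) :
    H.ext a0 ψ (H.j v) = ψ.linear v := by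
  rw [ext_apply, H.vOf_j, oneA_j, mul_zero, add_zero]

include H in
lemma finiteDimensional [FiniteDimensional K V] : FiniteDimensional K W := by
  have a0 : A := Classical.arbitrary A
  apply Module.Finite.of_surjective
    (H.j.coprod (LinearMap.toSpanSingleton K W (H.ι a0)))
  intro w
  refine ⟨(H.vOf a0 w, H.oneA w), ?_⟩
  simp [LinearMap.toSpanSingleton, j_vOf]

end VectorHull

section Aux2
variable {K V A : Type*} [Field K] [AddCommGroup V] [Module K V] [AddTorsor V A]

/-- The affine map with linear part `h` vanishing at `b`. -/
def affOf (b : A) (h : V →ₗ[K] K) : A →ᵃ[K] K where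
  toFun x := h (x -ᵥ b)
  linear := h
  map_vadd' p v := by
    show h ((v +ᵥ p) -ᵥ b) = h v +ᵥ h (p -ᵥ b)
    rw [vadd_vsub_assoc, map_add, vadd_eq_add]

/-- Evaluation at a point, as a linear map on affine maps. -/
def evalAt (a : A) : (A →ᵃ[K] K) →ₗ[K] K where
  toFun ψ := ψ a
  map_add' f g := by simp
  map_smul' c f := by simp

lemma exists_dual_one (v0 : V) (hv0 : v0 ≠ 0) : ∃ f : Module.Dual K V, f v0 = 1 := by
  by_contra h
  push_neg at h
  obtain ⟨g0, hg0⟩ : ∃ g : Module.Dual K V, g v0 ≠ 0 := by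
    by_contra h2; push_neg at h2
    exact hv0 ((Module.forall_dual_apply_eq_zero_iff K v0).1 h2)
  exact h ((g0 v0)⁻¹ • g0) (by simp [inv_mul_cancel₀ hg0])

end Aux2

set_option maxHeartbeats 2000000 in
/-- For a special affine space `A = (A, v⁰)`, `v⁰ ≠ 0`:
(1) the model vector space of the special affine dual `A^# = {φ ∈ Aff(A, K) : φ_v(v⁰) = 1}`,
namely `{φ ∈ Aff(A, K) : φ_v(v⁰) = 0}`, is canonically linearly isomorphic to
`Hom(Â/⟨v⁰⟩, K)` (linear functionals on the hull annihilating `v⁰`), the isomorphism being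
compatible with evaluation at points of `A`; and
(2) `(A^#)^# ≅ A` canonically: the evaluation map `ev a = (φ ↦ φ(a))` is injective, affine,
and has range exactly the special affine functions on `A^#`, i.e. those `g : A^# → K` which
are affine (restrictions of affine functions of the ambient vector space `A†`) and whose
linear part sends the distinguished vector `1_A` to `1`. -/
theorem stmt_10 {K V A W : Type*} [Field K]
    [AddCommGroup V] [Module K V] [AddTorsor V A]
    [AddCommGroup W] [Module K W] [FiniteDimensional K V]
    (H : VectorHull K V A W) (v0 : V) (hv0 : v0 ≠ 0) :
    (∃ e : LinearMap.ker (linPartAt K (A := A) v0) ≃ₗ[K]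
        Module.Dual K (W ⧸ Submodule.span K {H.j v0}),
      ∀ (φ : LinearMap.ker (linPartAt K (A := A) v0)) (a : A),
        e φ (Submodule.Quotient.mk (H.ι a)) = φ.1 a) ∧
    (Function.Injective
        (fun (a : A) => fun φ : {φ : A →ᵃ[K] K // φ.linear v0 = 1} => φ.1 a) ∧
      (∀ (v : V) (a : A) (φ : {φ : A →ᵃ[K] K // φ.linear v0 = 1}),
        φ.1 (v +ᵥ a) = φ.1.linear v + φ.1 a) ∧
      Set.range (fun (a : A) => fun φ : {φ : A →ᵃ[K] K // φ.linear v0 = 1} => φ.1 a) =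
        {g : {φ : A →ᵃ[K] K // φ.linear v0 = 1} → K |
          (∃ (T : (A →ᵃ[K] K) →ₗ[K] K) (c : K), ∀ φ, g φ = T φ.1 + c) ∧
          ∀ φ : {φ : A →ᵃ[K] K // φ.linear v0 = 1},
            g ⟨φ.1 + AffineMap.const K A (1 : K), by
              simp [AffineMap.add_linear, AffineMap.const_linear, φ.2]⟩ = g φ + 1}) := by
  
  have a0 : A := Classical.arbitrary A
  haveI : FiniteDimensional K W := H.finiteDimensional
  set N : Submodule K W := Submodule.span K {H.j v0} with hN
  obtain ⟨f, hf⟩ := exists_dual_one (K := K) v0 hv0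
  constructor
  · -- Part 1
    have hker : ∀ φ : LinearMap.ker (linPartAt K (A := A) v0),
        N ≤ LinearMap.ker (H.ext a0 φ.1) := by
      intro φ
      rw [hN, Submodule.span_le, Set.singleton_subset_iff]
      have hφ : φ.1.linear v0 = 0 := φ.2
      simp [SetLike.mem_coe, LinearMap.mem_ker, H.ext_j, hφ]
    set E : LinearMap.ker (linPartAt K (A := A) v0) →ₗ[K] Module.Dual K (W ⧸ N) :=
      { toFun := fun φ => N.liftQ (H.ext a0 φ.1) (hker φ)
        map_add' := fun φ ψ => by
          apply Submodule.linearMap_qext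
          rw [Submodule.liftQ_mkQ, LinearMap.add_comp, Submodule.liftQ_mkQ,
            Submodule.liftQ_mkQ]
          exact map_add (H.ext a0) φ.1 ψ.1
        map_smul' := fun c φ => by
          apply Submodule.linearMap_qext
          rw [Submodule.liftQ_mkQ, RingHom.id_apply, LinearMap.smul_comp,
            Submodule.liftQ_mkQ]
          exact map_smul (H.ext a0) c φ.1 } with hE
    set B : Module.Dual K (W ⧸ N) →ₗ[K] LinearMap.ker (linPartAt K (A := A) v0) :=
      LinearMap.codRestrict _ (H.res ∘ₗ N.mkQ.dualMap) (fun ff => by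
        rw [LinearMap.mem_ker]
        show (H.res (N.mkQ.dualMap ff)).linear v0 = 0
        rw [H.res_linear]
        show ff (N.mkQ (H.j v0)) = 0
        rw [Submodule.mkQ_apply, (Submodule.Quotient.mk_eq_zero N).2
          (Submodule.mem_span_singleton_self _), map_zero]) with hB
    have hEB : E ∘ₗ B = LinearMap.id := by
      apply LinearMap.ext
      intro ff
      apply Submodule.linearMap_qext
      show (N.liftQ (H.ext a0 ((B ff) : A →ᵃ[K] K)) _) ∘ₗ N.mkQ = ff ∘ₗ N.mkQ
      rw [Submodule.liftQ_mkQ]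
      have hBval : ((B ff) : A →ᵃ[K] K) = H.res (ff ∘ₗ N.mkQ) := rfl
      rw [hBval, H.ext_res]
    have hBE : B ∘ₗ E = LinearMap.id := by
      apply LinearMap.ext
      intro φ
      apply Subtype.ext
      show H.res ((N.liftQ (H.ext a0 φ.1) (hker φ)) ∘ₗ N.mkQ) = φ.1
      rw [Submodule.liftQ_mkQ, H.res_ext]
    refine ⟨LinearEquiv.ofLinear E B hEB hBE, fun φ a => ?_⟩
    show N.liftQ (H.ext a0 φ.1) (hker φ) (Submodule.Quotient.mk (H.ι a)) = φ.1 a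
    rw [Submodule.liftQ_apply]
    rw [← H.res_apply, H.res_ext]
  · refine ⟨?_, fun v a φ => by rw [AffineMap.map_vadd, vadd_eq_add], ?_⟩
    · -- injectivity
      intro a b hab
      have key : ∀ ψ : A →ᵃ[K] K, (h : ψ.linear v0 = 1) → ψ a = ψ b :=
        fun ψ h => congrFun hab ⟨ψ, h⟩
      have hz : ∀ h : V →ₗ[K] K, h v0 = 1 → h (a -ᵥ b) = 0 := by
        intro h hh
        have := key (affOf b h) hh
        simpa [affOf, vsub_self, map_zero] using this
      have hall : ∀ g : Module.Dual K V, g (a -ᵥ b) = 0 := by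
        intro g
        have h1 := hz f hf
        have h2 := hz (f + g - g v0 • f) (by simp [hf])
        simp only [LinearMap.sub_apply, LinearMap.add_apply, LinearMap.smul_apply,
          smul_eq_mul, h1, mul_zero, sub_zero, add_zero, zero_add] at h2
        exact h2
      have hab0 : a -ᵥ b = 0 := (Module.forall_dual_apply_eq_zero_iff K _).1 hall
      rwa [vsub_eq_zero_iff_eq] at hab0
    · -- range characterization
      ext g
      constructor
      · rintro ⟨a, rfl⟩
        refine ⟨⟨evalAt a, 0, fun φ => by simp [evalAt]⟩, fun φ => by simp⟩
      · rintro ⟨⟨T, c, hTc⟩, hshift⟩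
        have hT1 : T (AffineMap.const K A (1 : K)) = 1 := by
          have h0 := hshift ⟨affOf a0 f, hf⟩
          rw [hTc, hTc] at h0
          simp only [map_add] at h0
          linear_combination h0
        set Φ : Module.Dual K (Module.Dual K W) :=
          T ∘ₗ H.res + c • (Module.Dual.eval K W (H.j v0)) with hΦ
        obtain ⟨w, hw⟩ := (Module.evalEquiv K W).surjective Φ
        have hw' : ∀ F : Module.Dual K W, F w = T (H.res F) + c * F (H.j v0) := by
          intro F
          simp only [Module.evalEquiv_apply] at hw
          have h2 := LinearMap.congr_fun hw F
          simpa [Module.Dual.eval_apply, hΦ] using h2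
        have hresone : H.res H.oneA = AffineMap.const K A 1 := by
          ext x
          simp [H.res_apply, H.oneA_ι]
        have hone : H.oneA w = 1 := by
          have := hw' H.oneA
          rw [hresone, hT1, H.oneA_j, mul_zero, add_zero] at this
          exact this
        refine ⟨H.vOf a0 w +ᵥ a0, funext fun φ => ?_⟩
        have hιa : H.ι (H.vOf a0 w +ᵥ a0) = w := by
          rw [H.ι_vadd, H.j_vOf, hone, one_smul, sub_add_cancel]
        show φ.1 (H.vOf a0 w +ᵥ a0) = g φ
        have hF := hw' (H.ext a0 φ.1)
        rw [H.res_ext, H.ext_j, φ.2, mul_one] at hF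
        have hval : H.ext a0 φ.1 (H.ι (H.vOf a0 w +ᵥ a0)) = φ.1 (H.vOf a0 w +ᵥ a0) := by
          rw [← H.res_apply, H.res_ext]
        rw [hιa] at hval
        rw [← hval, hF, hTc φ]
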